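/- For any distribution D on ℝᵈ, base classifier f : ℝᵈ → Y, and points x, x′ ∈ ℝᵈ: if Δ(x; D, f) > 2·tv(D + x, D + x′), then g(x; D, f) = g(x′; D, f). -/

import Mathlib

open MeasureTheory

attribute [local instance] Classical.propDecidable

/-- Total variation distance between two measures. -/
noncomputable def tv {α : Type*} [MeasurableSpace α] (P Q : Measure α) : ℝ :=
  ⨆ A : {s : Set α // MeasurableSet s}, |(P A.1).toReal - (Q A.1).toReal|

/-- The score of class `y` at point `x` for the smoothing distribution `D` and
(randomized) base classifier `f`: the probability that `f(x + η) = y` for `η ~ D`. -/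
noncomputable def score {d : ℕ} {Y : Type} (D : Measure (EuclideanSpace ℝ (Fin d)))
    (f : EuclideanSpace ℝ (Fin d) → PMF Y) (y : Y) (x : EuclideanSpace ℝ (Fin d)) : ENNReal :=
  ∫⁻ η, f (x + η) y ∂D

/-- The smoothed classifier: outputs the class with the highest score, breaking
ties lexicographically (i.e. choosing the least maximizer). -/
noncomputable def gOut {d : ℕ} {Y : Type} [Fintype Y] [LinearOrder Y] [Nonempty Y]
    (D : Measure (EuclideanSpace ℝ (Fin d))) (f : EuclideanSpace ℝ (Fin d) → PMF Y)
    (x : EuclideanSpace ℝ (Fin d)) : Y :=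
  (Finset.univ.filter fun a : Y => ∀ y : Y, score D f y x ≤ score D f a x).min' (by
    obtain ⟨a, -, ha⟩ := Finset.exists_max_image (Finset.univ : Finset Y)
      (fun y => score D f y x) ⟨Classical.arbitrary Y, Finset.mem_univ _⟩
    exact ⟨a, Finset.mem_filter.mpr ⟨Finset.mem_univ _, fun y => ha y (Finset.mem_univ _)⟩⟩)

/-- The gap between the highest score and the runner-up score at `x`. -/
noncomputable def gap {d : ℕ} {Y : Type} [Fintype Y] [LinearOrder Y] [Nonempty Y]
    (D : Measure (EuclideanSpace ℝ (Fin d))) (f : EuclideanSpace ℝ (Fin d) → PMF Y)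
    (x : EuclideanSpace ℝ (Fin d)) : ENNReal :=
  score D f (gOut D f x) x - ⨆ y : {y : Y // y ≠ gOut D f x}, score D f y.1 x

section aux
set_option linter.unusedSectionVars false
variable {α : Type*} [MeasurableSpace α] (P Q : Measure α)
  [IsProbabilityMeasure P] [IsProbabilityMeasure Q]

lemma tv_nonneg : 0 ≤ tv P Q :=
  Real.iSup_nonneg fun _ => abs_nonneg _

lemma tv_comm : tv P Q = tv Q P := by
  unfold tv
  congr 1; funext A; rw [abs_sub_comm]

lemma tv_bdd : BddAbove (Set.range fun A : {s : Set α // MeasurableSet s} =>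
    |(P A.1).toReal - (Q A.1).toReal|) := by
  refine ⟨1, ?_⟩
  rintro r ⟨A, rfl⟩
  have h1 : (P A.1).toReal ≤ 1 := by
    simpa using ENNReal.toReal_mono ENNReal.one_ne_top (prob_le_one (μ := P) (s := A.1))
  have h2 : (Q A.1).toReal ≤ 1 := by
    simpa using ENNReal.toReal_mono ENNReal.one_ne_top (prob_le_one (μ := Q) (s := A.1))
  have h3 : (0:ℝ) ≤ (P A.1).toReal := ENNReal.toReal_nonneg
  have h4 : (0:ℝ) ≤ (Q A.1).toReal := ENNReal.toReal_nonneg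
  rw [abs_sub_le_iff]; constructor <;> linarith

lemma meas_le_add_tv {A : Set α} (hA : MeasurableSet A) :
    P A ≤ Q A + ENNReal.ofReal (tv P Q) := by
  have hle : |(P A).toReal - (Q A).toReal| ≤ tv P Q :=
    le_ciSup (tv_bdd P Q) ⟨A, hA⟩
  have h1 : (P A).toReal ≤ (Q A).toReal + tv P Q := by
    have := abs_sub_abs_le_abs_sub (P A).toReal (Q A).toReal
    have := le_abs_self ((P A).toReal - (Q A).toReal)
    linarith
  calc P A = ENNReal.ofReal (P A).toReal := (ENNReal.ofReal_toReal (measure_ne_top P A)).symm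
    _ ≤ ENNReal.ofReal ((Q A).toReal + tv P Q) := ENNReal.ofReal_le_ofReal h1
    _ ≤ ENNReal.ofReal (Q A).toReal + ENNReal.ofReal (tv P Q) := ENNReal.ofReal_add_le
    _ = Q A + ENNReal.ofReal (tv P Q) := by rw [ENNReal.ofReal_toReal (measure_ne_top Q A)]

lemma lintegral_le_lintegral_add_tv (g : α → ENNReal) (hg : ∀ a, g a ≤ 1) :
    ∫⁻ a, g a ∂P ≤ ∫⁻ a, g a ∂Q + ENNReal.ofReal (tv P Q) := by
  rw [lintegral_def]
  refine iSup_le fun φ => iSup_le fun hφ => ?_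
  have hφ1 : ∀ a, φ a ≤ 1 := fun a => (hφ a).trans (hg a)
  set r : α → ℝ := fun a => (φ a).toReal with hr
  have hrm : Measurable r := φ.measurable.ennreal_toReal
  have hr1 : ∀ a, r a ≤ 1 := fun a => by
    simpa using ENNReal.toReal_mono ENNReal.one_ne_top (hφ1 a)
  have hofr : ∀ a, ENNReal.ofReal (r a) = φ a := fun a =>
    ENNReal.ofReal_toReal (ne_top_of_le_ne_top ENNReal.one_ne_top (hφ1 a))
  have layerP : ∫⁻ a, φ a ∂P = ∫⁻ t in Set.Ioi 0, P {a | t < r a} := by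
    rw [← lintegral_eq_lintegral_meas_lt P (Filter.Eventually.of_forall fun a =>
      ENNReal.toReal_nonneg) hrm.aemeasurable]
    exact lintegral_congr fun a => (hofr a).symm
  have layerQ : ∫⁻ a, φ a ∂Q = ∫⁻ t in Set.Ioi 0, Q {a | t < r a} := by
    rw [← lintegral_eq_lintegral_meas_lt Q (Filter.Eventually.of_forall fun a =>
      ENNReal.toReal_nonneg) hrm.aemeasurable]
    exact lintegral_congr fun a => (hofr a).symm
  have key : ∫⁻ t in Set.Ioi 0, P {a | t < r a} ≤
      ∫⁻ t in Set.Ioi 0, (Q {a | t < r a} +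
        (Set.Ioc (0:ℝ) 1).indicator (fun _ => ENNReal.ofReal (tv P Q)) t) := by
    refine setLIntegral_mono' measurableSet_Ioi fun t ht => ?_
    by_cases h1 : t ≤ 1
    · have : (Set.Ioc (0:ℝ) 1).indicator (fun _ => ENNReal.ofReal (tv P Q)) t =
          ENNReal.ofReal (tv P Q) := Set.indicator_of_mem (Set.mem_Ioc.mpr ⟨Set.mem_Ioi.mp ht, h1⟩) _
      rw [this]
      exact meas_le_add_tv P Q (hrm measurableSet_Ioi)
    · have hempty : {a | t < r a} = ∅ := by
        ext a; simp only [Set.mem_setOf_eq, Set.mem_empty_iff_false, iff_false, not_lt]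
        exact (hr1 a).trans (le_of_not_ge h1)
      rw [hempty]
      simp
  have hindm : Measurable ((Set.Ioc (0:ℝ) 1).indicator
      (fun _ => ENNReal.ofReal (tv P Q))) :=
    measurable_const.indicator measurableSet_Ioc
  have split : ∫⁻ t in Set.Ioi 0, (Q {a | t < r a} +
      (Set.Ioc (0:ℝ) 1).indicator (fun _ => ENNReal.ofReal (tv P Q)) t) =
      (∫⁻ t in Set.Ioi 0, Q {a | t < r a}) + ENNReal.ofReal (tv P Q) := by
    rw [lintegral_add_right _ hindm]
    congr 1
    rw [lintegral_indicator measurableSet_Ioc]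
    simp [Measure.restrict_restrict, Set.Ioc_inter_Ioi, Real.volume_Ioc]
  have hφQ : ∫⁻ a, φ a ∂Q ≤ ∫⁻ a, g a ∂Q := lintegral_mono hφ
  calc φ.lintegral P = ∫⁻ a, φ a ∂P := (φ.lintegral_eq_lintegral P).symm
    _ ≤ (∫⁻ t in Set.Ioi 0, Q {a | t < r a}) + ENNReal.ofReal (tv P Q) := by
        rw [layerP]; exact key.trans_eq split
    _ = (∫⁻ a, φ a ∂Q) + ENNReal.ofReal (tv P Q) := by rw [layerQ]
    _ ≤ (∫⁻ a, g a ∂Q) + ENNReal.ofReal (tv P Q) := add_le_add_left hφQ _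

end aux

section s2
variable {d : ℕ} {Y : Type} (D : Measure (EuclideanSpace ℝ (Fin d)))
  (f : EuclideanSpace ℝ (Fin d) → PMF Y) (y : Y) (x : EuclideanSpace ℝ (Fin d))

lemma score_eq_map : score D f y x = ∫⁻ z, f z y ∂(D.map (· + x)) := by
  have hplus : Measurable (fun η : EuclideanSpace ℝ (Fin d) => η + x) := measurable_add_const x
  have hminus : Measurable (fun z : EuclideanSpace ℝ (Fin d) => z - x) := measurable_sub_const x
  apply le_antisymm
  · have hD : (D.map (· + x)).map (· - x) = D := by
      rw [Measure.map_map hminus hplus]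
      have : ((fun z : EuclideanSpace ℝ (Fin d) => z - x) ∘ fun η => η + x) = id := by
        funext η; simp
      rw [this, Measure.map_id]
    calc score D f y x = ∫⁻ η, f (x + η) y ∂((D.map (· + x)).map (· - x)) := by
          rw [hD]; rfl
      _ ≤ ∫⁻ z, f (x + (z - x)) y ∂(D.map (· + x)) := lintegral_map_le _ _
      _ = ∫⁻ z, f z y ∂(D.map (· + x)) := by
          apply lintegral_congr; intro z; rw [add_sub_cancel]
  · calc ∫⁻ z, f z y ∂(D.map (· + x)) ≤ ∫⁻ η, f (η + x) y ∂D := lintegral_map_le _ _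
      _ = score D f y x := by
          apply lintegral_congr; intro η; rw [add_comm]

lemma score_le_one : score D f y x ≤ ∫⁻ _, 1 ∂D := lintegral_mono fun η => (f (x + η)).coe_le_one y

end s2

lemma gOut_spec {d : ℕ} {Y : Type} [Fintype Y] [LinearOrder Y] [Nonempty Y]
    (D : Measure (EuclideanSpace ℝ (Fin d))) (f : EuclideanSpace ℝ (Fin d) → PMF Y)
    (x : EuclideanSpace ℝ (Fin d)) :
    ∀ y : Y, score D f y x ≤ score D f (gOut D f x) x := by
  have hmem : gOut D f x ∈ Finset.univ.filter
      fun a : Y => ∀ y : Y, score D f y x ≤ score D f a x := by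
    unfold gOut
    apply Finset.min'_mem
  exact (Finset.mem_filter.mp hmem).2

set_option maxHeartbeats 1000000 in
theorem stmt10 {d : ℕ} {Y : Type} [Fintype Y] [LinearOrder Y] [Nonempty Y]
    (D : Measure (EuclideanSpace ℝ (Fin d))) [IsProbabilityMeasure D]
    (f : EuclideanSpace ℝ (Fin d) → PMF Y) (x x' : EuclideanSpace ℝ (Fin d))
    (h : ENNReal.ofReal (2 * tv (D.map (· + x)) (D.map (· + x'))) < gap D f x) :
    gOut D f x = gOut D f x' := by
  classical
  set P := D.map (· + x) with hPdef
  set Q := D.map (· + x') with hQdef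
  have hplus : Measurable (fun η : EuclideanSpace ℝ (Fin d) => η + x) := measurable_add_const x
  have hplus' : Measurable (fun η : EuclideanSpace ℝ (Fin d) => η + x') := measurable_add_const x'
  haveI : IsProbabilityMeasure P := Measure.isProbabilityMeasure_map hplus.aemeasurable
  haveI : IsProbabilityMeasure Q := Measure.isProbabilityMeasure_map hplus'.aemeasurable
  set ε := ENNReal.ofReal (tv P Q) with hεdef
  have hεtop : ε ≠ ⊤ := ENNReal.ofReal_ne_top
  have hbound1 : ∀ y, score D f y x ≤ score D f y x' + ε := fun y => by
    rw [score_eq_map, score_eq_map]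
    exact lintegral_le_lintegral_add_tv P Q _ (fun z => (f z).coe_le_one y)
  have hbound2 : ∀ y, score D f y x' ≤ score D f y x + ε := fun y => by
    rw [score_eq_map, score_eq_map]
    have := lintegral_le_lintegral_add_tv Q P _ (fun z => (f z).coe_le_one y)
    rwa [tv_comm Q P] at this
  set a := gOut D f x with ha
  set S := ⨆ y : {y : Y // y ≠ a}, score D f y.1 x with hSdef
  have hSne : S ≠ ⊤ := by
    refine ne_top_of_le_ne_top (ENNReal.one_ne_top) (iSup_le fun y => ?_)
    exact (score_le_one D f y.1 x).trans (by simp)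
  have h2ε : ENNReal.ofReal (2 * tv P Q) = ε + ε := by
    rw [two_mul, ENNReal.ofReal_add (tv_nonneg P Q) (tv_nonneg P Q)]
  have h' : ε + ε + S < score D f a x := by
    have := (ENNReal.cancel_of_ne hSne).lt_tsub_iff_right.mp (h2ε ▸ h)
    exact this
  have hlt : ∀ b, b ≠ a → score D f b x' < score D f a x' := by
    intro b hb
    have h1 : score D f b x' ≤ S + ε :=
      (hbound2 b).trans (add_le_add_left
        (le_iSup (fun y : {y : Y // y ≠ a} => score D f y.1 x) ⟨b, hb⟩) ε)
    have h2 : S + ε + ε < score D f a x' + ε := by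
      calc S + ε + ε = ε + ε + S := by ring
        _ < score D f a x := h'
        _ ≤ score D f a x' + ε := hbound1 a
    have h3 : S + ε < score D f a x' := (ENNReal.add_lt_add_iff_right hεtop).mp h2
    exact h1.trans_lt h3
  have hall := gOut_spec D f x'
  by_contra hne
  have hb : gOut D f x' ≠ a := fun hh => hne hh.symm
  exact absurd (hall a) (not_le.mpr (hlt _ hb))
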